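/- arXiv:2009.01217 — 10 statements merged into one kernel-verified Lean document; each statement's English description precedes it below -/
import Mathlib

section
/- The forward space of an automaton with n states is spanned by the vectors α M(w) for words w of length at most n−1, i.e., span{α M(w) : w ∈ Σ*} = span{α M(w) : w ∈ Σ*, |w| ≤ n−1}. -/
open Matrix

section Aux

variable {K : Type*} [Field K] {Sig : Type*} {n : ℕ}

/-- The span of `{α M(w) : |w| ≤ k}`. -/
private def fwd (M : Sig → Matrix (Fin n) (Fin n) K) (α : Fin n → K) (k : ℕ) :
    Submodule K (Fin n → K) :=
  Submodule.span K
    {v | ∃ w : List Sig, w.length ≤ k ∧ v = Matrix.vecMul α ((w.map M).prod)}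

private lemma fwd_mono (M : Sig → Matrix (Fin n) (Fin n) K) (α : Fin n → K)
    {k l : ℕ} (hkl : k ≤ l) : fwd M α k ≤ fwd M α l :=
  Submodule.span_mono fun _v ⟨w, hw, e⟩ => ⟨w, hw.trans hkl, e⟩

private lemma vecMul_mem_fwd (M : Sig → Matrix (Fin n) (Fin n) K) (α : Fin n → K)
    {k : ℕ} {x : Fin n → K} (hx : x ∈ fwd M α k) (a : Sig) :
    Matrix.vecMul x (M a) ∈ fwd M α (k + 1) := by
  have hmap : Submodule.map (M a).vecMulLinear (fwd M α k) ≤ fwd M α (k + 1) := by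
    rw [fwd, Submodule.map_span, Submodule.span_le]
    rintro v ⟨u, ⟨w, hw, rfl⟩, rfl⟩
    apply Submodule.subset_span
    refine ⟨w ++ [a], by simpa using Nat.add_le_add_right hw 1, ?_⟩
    simp [Matrix.vecMulLinear, Matrix.vecMul_vecMul]
  exact hmap ⟨x, hx, rfl⟩

private lemma all_mem_fwd (M : Sig → Matrix (Fin n) (Fin n) K) (α : Fin n → K)
    {k : ℕ} (h : fwd M α k = fwd M α (k + 1)) (w : List Sig) :
    Matrix.vecMul α ((w.map M).prod) ∈ fwd M α k := by
  induction w using List.reverseRecOn with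
  | nil =>
      exact Submodule.subset_span ⟨[], Nat.zero_le _, rfl⟩
  | append_singleton w a ih =>
      have : Matrix.vecMul (Matrix.vecMul α ((w.map M).prod)) (M a) ∈ fwd M α (k + 1) :=
        vecMul_mem_fwd M α ih a
      rw [← h] at this
      simpa [Matrix.vecMul_vecMul] using this

private lemma fwd_zero_eq (M : Sig → Matrix (Fin n) (Fin n) K) (α : Fin n → K) :
    fwd M α 0 = Submodule.span K {α} := by
  unfold fwd
  congr 1
  ext v
  constructor
  · rintro ⟨w, hw, rfl⟩
    rw [List.length_eq_zero_iff.mp (Nat.le_zero.mp hw)]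
    simp
  · rintro rfl
    exact ⟨[], Nat.le_refl 0, by simp⟩

end Aux

/-- The forward space of an `n`-state automaton is spanned by the
vectors `α M(w)` for words `w` of length at most `n − 1`:
`span{α M(w) : w ∈ Σ*} = span{α M(w) : |w| ≤ n − 1}`. -/
theorem forward_space_short_words (K : Type*) [Field K] (Sig : Type*) [Fintype Sig]
    (n : ℕ) (M : Sig → Matrix (Fin n) (Fin n) K) (α : Fin n → K) :
    Submodule.span K (Set.range fun w : List Sig => Matrix.vecMul α ((w.map M).prod)) =
      Submodule.span K
        {v | ∃ w : List Sig, w.length ≤ n - 1 ∧ v = Matrix.vecMul α ((w.map M).prod)} := by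
  by_cases hα : α = 0
  · subst hα
    refine le_antisymm (Submodule.span_le.mpr ?_) (Submodule.span_le.mpr ?_)
    · rintro v ⟨w, rfl⟩
      simp
    · rintro v ⟨w, hw, rfl⟩
      simp
  -- α ≠ 0, so n ≥ 1
  have hn : 1 ≤ n := by
    by_contra h
    push_neg at h
    interval_cases n
    exact hα (Subsingleton.elim _ _)
  -- there is some k ≤ n - 1 with fwd k = fwd (k+1)
  have hstab : ∃ k ≤ n - 1, fwd M α k = fwd M α (k + 1) := by
    by_contra hc
    push_neg at hc
    have key : ∀ j ≤ n, j + 1 ≤ Module.finrank K (fwd M α j) := by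
      intro j hj
      induction j with
      | zero =>
          rw [fwd_zero_eq, Nat.one_le_iff_ne_zero]
          rw [show Submodule.span K {α} = K ∙ α from rfl, finrank_span_singleton hα]
          exact one_ne_zero
      | succ j ih =>
          have hj' : j ≤ n := Nat.le_of_succ_le hj
          have hjn : j ≤ n - 1 := Nat.le_sub_one_of_lt hj
          have hlt : fwd M α j < fwd M α (j + 1) :=
            lt_of_le_of_ne (fwd_mono M α (Nat.le_succ j)) (hc j hjn)
          have h1 := Submodule.finrank_lt_finrank_of_lt hlt
          have h2 := ih hj'
          omega
    have h1 := key n le_rfl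
    have h2 : Module.finrank K (fwd M α n) ≤ Module.finrank K (Fin n → K) :=
      Submodule.finrank_le _
    rw [Module.finrank_fin_fun] at h2
    omega
  obtain ⟨k, hk, hfix⟩ := hstab
  refine le_antisymm (Submodule.span_le.mpr ?_) (Submodule.span_le.mpr ?_)
  · rintro v ⟨w, rfl⟩
    exact fwd_mono M α hk (all_mem_fwd M α hfix w)
  · rintro v ⟨w, hw, rfl⟩
    exact Submodule.subset_span ⟨w, rfl⟩
end

section
/- If an automaton A with n states has ⟦A⟧(w) ≠ 0 for some word w, then there exists a word w' with |w'| ≤ n−1 and ⟦A⟧(w') ≠ 0. -/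
open Matrix

/-- If an `n`-state automaton has `⟦A⟧(w) ≠ 0` for some word `w`,
then there is a word `w'` with `|w'| ≤ n − 1` and `⟦A⟧(w') ≠ 0`. -/
theorem short_nonzero_witness (K : Type*) [Field K] (Sig : Type*) [Fintype Sig]
    (n : ℕ) (M : Sig → Matrix (Fin n) (Fin n) K) (α η : Fin n → K)
    (h : ∃ w : List Sig, Matrix.vecMul α ((w.map M).prod) ⬝ᵥ η ≠ 0) :
    ∃ w' : List Sig, w'.length ≤ n - 1 ∧ Matrix.vecMul α ((w'.map M).prod) ⬝ᵥ η ≠ 0 := by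
  classical
  obtain ⟨w, hw⟩ := h
  -- n = 0 is impossible
  rcases Nat.eq_zero_or_pos n with hn | hn
  · subst hn
    exact absurd (by simp [dotProduct]) hw
  -- α = 0 is impossible
  by_cases hα : α = 0
  · subst hα
    exact absurd (by simp) hw
  obtain ⟨m, rfl⟩ : ∃ m, n = m + 1 := ⟨n - 1, by omega⟩
  set V : ℕ → Submodule K (Fin (m + 1) → K) := fun k =>
    Submodule.span K {x | ∃ w : List Sig, w.length ≤ k ∧ x = Matrix.vecMul α ((w.map M).prod)}
    with hV
  have hmono : ∀ {j k : ℕ}, j ≤ k → V j ≤ V k := by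
    intro j k hjk
    exact Submodule.span_mono (fun x ⟨w, hl, hx⟩ => ⟨w, hl.trans hjk, hx⟩)
  have hmem : ∀ w : List Sig, Matrix.vecMul α ((w.map M).prod) ∈ V w.length := by
    intro w
    exact Submodule.subset_span ⟨w, le_refl _, rfl⟩
  have hmap : ∀ (a : Sig) (k : ℕ), ∀ x ∈ V k, Matrix.vecMul x (M a) ∈ V (k + 1) := by
    intro a k x hx
    induction hx using Submodule.span_induction with
    | mem y hy =>
      obtain ⟨w, hl, rfl⟩ := hy
      refine Submodule.subset_span ⟨w ++ [a], by simp; omega, ?_⟩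
      simp [Matrix.vecMul_vecMul]
    | zero => simp [Matrix.zero_vecMul]
    | add y z _ _ hy hz =>
      rw [Matrix.add_vecMul]
      exact (V (k + 1)).add_mem hy hz
    | smul c y _ hy =>
      rw [Matrix.smul_vecMul]
      exact (V (k + 1)).smul_mem c hy
  have hstep : ∀ k : ℕ, V k = V (k + 1) → V (k + 1) = V (k + 2) := by
    intro k hk
    refine le_antisymm (hmono (by omega)) ?_
    rw [hV]
    refine Submodule.span_le.2 ?_
    rintro x ⟨w, hl, rfl⟩
    rcases w.eq_nil_or_concat with rfl | ⟨L, a, rfl⟩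
    · exact hmono (Nat.zero_le _) (hmem [])
    · have hL : L.length ≤ k + 1 := by simp at hl; omega
      have h1 : Matrix.vecMul α ((L.map M).prod) ∈ V k := by
        rw [hk]
        exact hmono hL (hmem L)
      have h2 := hmap a k _ h1
      have : Matrix.vecMul α (((L.concat a).map M).prod)
          = Matrix.vecMul (Matrix.vecMul α ((L.map M).prod)) (M a) := by
        simp [List.concat_eq_append, Matrix.vecMul_vecMul]
      rw [this]
      exact h2
  have hstab : ∀ k : ℕ, V k = V (k + 1) → ∀ j, V (k + j) = V k := by
    intro k hk
    have haux : ∀ j, V (k + j) = V (k + j + 1) := by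
      intro j
      induction j with
      | zero => exact hk
      | succ i ih => exact hstep (k + i) ih
    intro j
    induction j with
    | zero => rfl
    | succ i ih => rw [← Nat.add_assoc, ← haux i] at *; exact ih
  -- there is a stabilization point k ≤ m
  have hex : ∃ k ≤ m, V k = V (k + 1) := by
    by_contra hc
    push_neg at hc
    have hlt : ∀ k ≤ m, V k < V (k + 1) := fun k hk =>
      lt_of_le_of_ne (hmono (Nat.le_succ k)) (hc k hk)
    have hrank : ∀ k ≤ m + 1, k + 1 ≤ Module.finrank K (V k) := by
      intro k hk
      induction k with
      | zero =>
        have hne : V 0 ≠ ⊥ := by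
          intro hbot
          have : α ∈ V 0 := by
            have := hmem []
            simpa using this
          rw [hbot, Submodule.mem_bot] at this
          exact hα this
        have : Module.finrank K (V 0) ≠ 0 := by
          intro h0
          exact hne (Submodule.finrank_eq_zero.mp h0)
        omega
      | succ i ih =>
        have h1 : i + 1 ≤ Module.finrank K (V i) := ih (by omega)
        have h2 : Module.finrank K (V i) < Module.finrank K (V (i + 1)) :=
          Submodule.finrank_lt_finrank_of_lt (hlt i (by omega))
        omega
    have h1 := hrank (m + 1) le_rfl
    have h2 : Module.finrank K (V (m + 1)) ≤ Module.finrank K (Fin (m + 1) → K) :=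
      Submodule.finrank_le _
    rw [Module.finrank_fintype_fun_eq_card, Fintype.card_fin] at h2
    omega
  obtain ⟨k, hkm, hk⟩ := hex
  -- all reachable vectors are in V k
  have hall : ∀ w : List Sig, Matrix.vecMul α ((w.map M).prod) ∈ V k := by
    intro w
    have : V w.length ≤ V k := by
      rcases le_or_gt w.length k with hle | hgt
      · exact hmono hle
      · rw [show w.length = k + (w.length - k) by omega]
        exact (hstab k hk (w.length - k)).le
    exact this (hmem w)
  by_contra hcon
  push_neg at hcon
  -- the dot-product-with-η functional
  set φ : (Fin (m + 1) → K) →ₗ[K] K :=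
    { toFun := fun x => x ⬝ᵥ η
      map_add' := fun x y => add_dotProduct x y η
      map_smul' := fun c x => smul_dotProduct c x η } with hφ
  have hker : V k ≤ LinearMap.ker φ := by
    rw [hV]
    refine Submodule.span_le.2 ?_
    rintro x ⟨w', hl, rfl⟩
    simp only [SetLike.mem_coe, LinearMap.mem_ker]
    exact hcon w' (by omega)
  have := hker (hall w)
  rw [LinearMap.mem_ker] at this
  exact hw this
end

section
/- If two automata A₁, A₂ with n₁ and n₂ states respectively are inequivalent, then there exists a word w with |w| ≤ n₁ + n₂ − 1 such that ⟦A₁⟧(w) ≠ ⟦A₂⟧(w). -/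
open Matrix

section SIWAux

variable {K : Type*} [Field K] {Sig : Type*} [Fintype Sig] {n₁ n₂ : ℕ}
variable (M₁ : Sig → Matrix (Fin n₁) (Fin n₁) K) (α₁ : Fin n₁ → K)
variable (M₂ : Sig → Matrix (Fin n₂) (Fin n₂) K) (α₂ : Fin n₂ → K)

/-- The reachability vector of a word in the product space. -/
def SIWvv (w : List Sig) : (Fin n₁ → K) × (Fin n₂ → K) :=
  (α₁ ᵥ* (w.map M₁).prod, α₂ ᵥ* (w.map M₂).prod)

/-- The transition linear map for a letter. -/
def SIWT (a : Sig) : ((Fin n₁ → K) × (Fin n₂ → K)) →ₗ[K] ((Fin n₁ → K) × (Fin n₂ → K)) :=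
  ((M₁ a).vecMulLinear).prodMap ((M₂ a).vecMulLinear)

/-- Span of reachability vectors of words of length at most `k`. -/
def SIWU (k : ℕ) : Submodule K ((Fin n₁ → K) × (Fin n₂ → K)) :=
  Submodule.span K (SIWvv M₁ α₁ M₂ α₂ '' {w | w.length ≤ k})

lemma SIWvv_concat (w : List Sig) (a : Sig) :
    SIWvv M₁ α₁ M₂ α₂ (w ++ [a]) = SIWT M₁ M₂ a (SIWvv M₁ α₁ M₂ α₂ w) := by
  simp [SIWvv, SIWT, Matrix.vecMulLinear_apply, Matrix.vecMul_vecMul]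

lemma SIWU_mono : Monotone (SIWU M₁ α₁ M₂ α₂) := by
  intro i j hij
  apply Submodule.span_mono
  exact Set.image_mono (fun w hw => le_trans hw hij)

lemma SIWU_step (k : ℕ) :
    SIWU M₁ α₁ M₂ α₂ (k + 1) =
      SIWU M₁ α₁ M₂ α₂ k ⊔ ⨆ a : Sig, (SIWU M₁ α₁ M₂ α₂ k).map (SIWT M₁ M₂ a) := by
  apply le_antisymm
  · rw [SIWU, Submodule.span_le]
    rintro _ ⟨w, hw, rfl⟩
    rcases List.eq_nil_or_concat w with rfl | ⟨w', a, rfl⟩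
    · exact Submodule.mem_sup_left (Submodule.subset_span ⟨[], by simp, rfl⟩)
    · rw [List.concat_eq_append, SIWvv_concat]
      refine Submodule.mem_sup_right (Submodule.mem_iSup_of_mem a ?_)
      refine Submodule.mem_map_of_mem (Submodule.subset_span ⟨w', ?_, rfl⟩)
      have := hw
      simp only [Set.mem_setOf_eq, List.concat_eq_append, List.length_append,
        List.length_cons, List.length_nil] at this ⊢
      omega
  · refine sup_le (SIWU_mono M₁ α₁ M₂ α₂ (by omega)) (iSup_le fun a => ?_)
    rw [SIWU, Submodule.map_span, Submodule.span_le]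
    rintro _ ⟨_, ⟨w, hw, rfl⟩, rfl⟩
    rw [← SIWvv_concat]
    apply Submodule.subset_span
    refine ⟨w ++ [a], ?_, rfl⟩
    simp only [Set.mem_setOf_eq, List.length_append, List.length_cons, List.length_nil]
    simp only [Set.mem_setOf_eq] at hw
    omega

lemma SIWU_stab {k : ℕ} (hk : SIWU M₁ α₁ M₂ α₂ k = SIWU M₁ α₁ M₂ α₂ (k + 1)) :
    ∀ m, SIWU M₁ α₁ M₂ α₂ (k + m) = SIWU M₁ α₁ M₂ α₂ k := by
  intro m
  induction m with
  | zero => rfl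
  | succ m ih =>
    have : k + (m + 1) = (k + m) + 1 := by omega
    rw [this, SIWU_step, ih, ← SIWU_step, ← hk]

end SIWAux

/-- If two automata with `n₁` and `n₂` states are inequivalent,
then some word `w` with `|w| ≤ n₁ + n₂ − 1` satisfies `⟦A₁⟧(w) ≠ ⟦A₂⟧(w)`. -/
theorem short_inequivalence_witness (K : Type*) [Field K] (Sig : Type*) [Fintype Sig]
    (n₁ n₂ : ℕ)
    (M₁ : Sig → Matrix (Fin n₁) (Fin n₁) K) (α₁ η₁ : Fin n₁ → K)
    (M₂ : Sig → Matrix (Fin n₂) (Fin n₂) K) (α₂ η₂ : Fin n₂ → K)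
    (h : ¬ ∀ w : List Sig,
      Matrix.vecMul α₁ ((w.map M₁).prod) ⬝ᵥ η₁ = Matrix.vecMul α₂ ((w.map M₂).prod) ⬝ᵥ η₂) :
    ∃ w : List Sig, w.length ≤ n₁ + n₂ - 1 ∧
      Matrix.vecMul α₁ ((w.map M₁).prod) ⬝ᵥ η₁ ≠ Matrix.vecMul α₂ ((w.map M₂).prod) ⬝ᵥ η₂ := by
  by_contra hc
  push_neg at hc
  apply h
  set N := n₁ + n₂ - 1 with hN
  -- the linear functional
  set φ : ((Fin n₁ → K) × (Fin n₂ → K)) →ₗ[K] K :=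
    { toFun := fun p => p.1 ⬝ᵥ η₁ - p.2 ⬝ᵥ η₂
      map_add' := fun p q => by simp [add_dotProduct]; ring
      map_smul' := fun c p => by simp [smul_dotProduct]; ring } with hφ
  have hφv : ∀ w : List Sig, w.length ≤ N →
      φ (SIWvv M₁ α₁ M₂ α₂ w) = 0 := by
    intro w hw
    have := hc w hw
    simp [hφ, SIWvv, this]
  -- U N is killed by φ
  have hker : SIWU M₁ α₁ M₂ α₂ N ≤ LinearMap.ker φ := by
    rw [SIWU, Submodule.span_le]
    rintro _ ⟨w, hw, rfl⟩
    exact LinearMap.mem_ker.mpr (hφv w hw)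
  -- stabilization index exists
  have hstab : ∃ k ≤ N, SIWU M₁ α₁ M₂ α₂ k = SIWU M₁ α₁ M₂ α₂ (k + 1) := by
    by_cases hε : SIWvv M₁ α₁ M₂ α₂ ([] : List Sig) = 0
    · -- then α₁ = 0 and α₂ = 0, all vv are 0
      have hα₁ : α₁ = 0 := by
        have := congrArg Prod.fst hε
        simpa [SIWvv] using this
      have hα₂ : α₂ = 0 := by
        have := congrArg Prod.snd hε
        simpa [SIWvv] using this
      refine ⟨0, Nat.zero_le N, ?_⟩
      have hall : ∀ w : List Sig, SIWvv M₁ α₁ M₂ α₂ w = 0 := by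
        intro w; simp [SIWvv, hα₁, hα₂, Matrix.zero_vecMul]
      have hbot : ∀ k, SIWU M₁ α₁ M₂ α₂ k = (⊥ : Submodule K _) := by
        intro k
        rw [SIWU, eq_bot_iff, Submodule.span_le]
        rintro _ ⟨w, _, rfl⟩
        simp [hall w]
      rw [hbot 0, hbot 1]
    · by_contra hno
      push_neg at hno
      have hlt : ∀ k ≤ N, SIWU M₁ α₁ M₂ α₂ k < SIWU M₁ α₁ M₂ α₂ (k + 1) := by
        intro k hk
        exact lt_of_le_of_ne (SIWU_mono M₁ α₁ M₂ α₂ (by omega)) (hno k hk)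
      have hrank : ∀ k ≤ N + 1, k + 1 ≤ Module.finrank K (SIWU M₁ α₁ M₂ α₂ k) := by
        intro k
        induction k with
        | zero =>
          intro _
          have hmem : SIWvv M₁ α₁ M₂ α₂ ([] : List Sig) ∈ SIWU M₁ α₁ M₂ α₂ 0 :=
            Submodule.subset_span ⟨[], by simp, rfl⟩
          have hne : SIWU M₁ α₁ M₂ α₂ 0 ≠ ⊥ := by
            intro hb; rw [hb] at hmem; exact hε (Submodule.mem_bot K |>.mp hmem)
          have hiff := Submodule.finrank_eq_zero (S := SIWU M₁ α₁ M₂ α₂ 0) (R := K)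
          have h0 : Module.finrank K (SIWU M₁ α₁ M₂ α₂ 0) ≠ 0 := fun hz => hne (hiff.mp hz)
          omega
        | succ k ih =>
          intro hk
          have h1 := ih (by omega)
          have h2 := Submodule.finrank_lt_finrank_of_lt (hlt k (by omega))
          omega
      have hle : Module.finrank K (SIWU M₁ α₁ M₂ α₂ (N + 1)) ≤ n₁ + n₂ := by
        have := Submodule.finrank_le (SIWU M₁ α₁ M₂ α₂ (N + 1))
        have hW : Module.finrank K ((Fin n₁ → K) × (Fin n₂ → K)) = n₁ + n₂ := by
          simp [Module.finrank_prod]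
        omega
      have hr := hrank (N + 1) le_rfl
      have hn : 1 ≤ n₁ + n₂ := by
        by_contra hn0
        push_neg at hn0
        have h1 : n₁ = 0 := by omega
        have h2 : n₂ = 0 := by omega
        subst h1; subst h2
        exact hε (Subsingleton.elim _ _)
      omega
  obtain ⟨k, hkN, hk⟩ := hstab
  -- every vv w lies in U N
  have hall : ∀ w : List Sig, SIWvv M₁ α₁ M₂ α₂ w ∈ SIWU M₁ α₁ M₂ α₂ N := by
    intro w
    have h1 : SIWvv M₁ α₁ M₂ α₂ w ∈ SIWU M₁ α₁ M₂ α₂ w.length :=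
      Submodule.subset_span ⟨w, Set.mem_setOf.mpr le_rfl, rfl⟩
    have h2 : SIWU M₁ α₁ M₂ α₂ w.length ≤ SIWU M₁ α₁ M₂ α₂ (k + w.length) :=
      SIWU_mono M₁ α₁ M₂ α₂ (by omega)
    rw [SIWU_stab M₁ α₁ M₂ α₂ hk w.length] at h2
    exact SIWU_mono M₁ α₁ M₂ α₂ hkN (h2 h1)
  intro w
  have := hker (hall w)
  rw [LinearMap.mem_ker] at this
  have : (α₁ ᵥ* (w.map M₁).prod) ⬝ᵥ η₁ - (α₂ ᵥ* (w.map M₂).prod) ⬝ᵥ η₂ = 0 := this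
  exact sub_eq_zero.mp this
end

section
/- Let F be a matrix whose rows form a basis of the forward space of A, with F M(a) = M⃗(a) F for all a ∈ Σ, and α = α⃗ F. Then the forward conjugate A⃗ = (n⃗, Σ, M⃗, α⃗, F η) satisfies ⟦A⃗⟧ = ⟦A⟧. -/
open Matrix

/-- If the rows of `F` form a basis of the forward space of `A`,
`F M(a) = M⃗(a) F` for all letters `a`, and `α = α⃗ F`, then the forward
conjugate `A⃗ = (n⃗, Σ, M⃗, α⃗, F η)` satisfies `⟦A⃗⟧ = ⟦A⟧`. -/
theorem forward_conjugate_equivalent (K : Type*) [Field K] (Sig : Type*) [Fintype Sig]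
    (n nf : ℕ) (M : Sig → Matrix (Fin n) (Fin n) K) (α η : Fin n → K)
    (F : Matrix (Fin nf) (Fin n) K)
    (hind : LinearIndependent K (fun i => F i))
    (hspan : Submodule.span K (Set.range fun i => F i) =
      Submodule.span K (Set.range fun w : List Sig => Matrix.vecMul α ((w.map M).prod)))
    (Mf : Sig → Matrix (Fin nf) (Fin nf) K)
    (hM : ∀ a : Sig, F * M a = Mf a * F)
    (αf : Fin nf → K) (hα : Matrix.vecMul αf F = α) :
    ∀ w : List Sig,
      Matrix.vecMul αf ((w.map Mf).prod) ⬝ᵥ F.mulVec η =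
        Matrix.vecMul α ((w.map M).prod) ⬝ᵥ η := by
  have key : ∀ w : List Sig, F * (w.map M).prod = (w.map Mf).prod * F := by
    intro w
    induction w with
    | nil => simp
    | cons a w ih =>
      simp only [List.map_cons, List.prod_cons, ← Matrix.mul_assoc, hM a]
      rw [Matrix.mul_assoc, ih, Matrix.mul_assoc]
  intro w
  rw [dotProduct_mulVec, Matrix.vecMul_vecMul, ← key, ← Matrix.vecMul_vecMul, hα]
end

section
/- If A is an automaton with n states, then the rank of the Hankel matrix of ⟦A⟧ is at most n. -/
open Matrix

noncomputable def hankelL (K : Type*) [Field K] (Sig : Type*) (n : ℕ)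
    (M : Sig → Matrix (Fin n) (Fin n) K) (η : Fin n → K) :
    (Fin n → K) →ₗ[K] (List Sig → K) where
  toFun v := fun y => Matrix.vecMul v ((y.map M).prod) ⬝ᵥ η
  map_add' u v := by
    funext y
    simp [Matrix.add_vecMul, add_dotProduct]
  map_smul' c v := by
    funext y
    simp [Matrix.smul_vecMul, smul_dotProduct]

/-- If `A` is an automaton with `n` states, then the rank of the
Hankel matrix of `⟦A⟧` (the dimension of the span of its rows in the function
space `K^{Σ*}`) is at most `n`. -/
theorem hankel_rank_le (K : Type*) [Field K] (Sig : Type*) [Fintype Sig]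
    (n : ℕ) (M : Sig → Matrix (Fin n) (Fin n) K) (α η : Fin n → K) :
    Module.rank K
        (Submodule.span K (Set.range fun x : List Sig =>
          fun y : List Sig => Matrix.vecMul α (((x ++ y).map M).prod) ⬝ᵥ η)) ≤ n := by
  have hle : (Submodule.span K (Set.range fun x : List Sig =>
      fun y : List Sig => Matrix.vecMul α (((x ++ y).map M).prod) ⬝ᵥ η)) ≤
      LinearMap.range (hankelL K Sig n M η) := by
    rw [Submodule.span_le]
    rintro _ ⟨x, rfl⟩
    exact ⟨Matrix.vecMul α ((x.map M).prod), by
      funext y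
      simp [hankelL, List.map_append, List.prod_append, Matrix.vecMul_vecMul]⟩
  refine (Submodule.rank_mono hle).trans ?_
  have h := lift_rank_range_le (hankelL K Sig n M η)
  rw [show Module.rank K (Fin n → K) = n by simp] at h
  simpa [Cardinal.lift_natCast, Cardinal.lift_le_nat_iff] using h
end

section
/- A forward conjugate of any automaton is forward-minimal: if A⃗ = (n⃗, Σ, M⃗, α⃗, F η) is the forward conjugate of A with base F, then the forward space of A⃗ has dimension n⃗ (i.e., span{α⃗ M⃗(w) : w ∈ Σ*} = K^{n⃗}). -/
open Matrix

/-- A forward conjugate is forward-minimal: if `A⃗` is the forward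
conjugate of `A` with base `F` (rows of `F` form a basis of the forward space
of `A`, `F M(a) = M⃗(a) F`, `α⃗ F = α`), then the forward space of `A⃗` is all
of `K^{n⃗}`. -/
theorem forward_conjugate_forward_minimal (K : Type*) [Field K] (Sig : Type*) [Fintype Sig]
    (n nf : ℕ) (M : Sig → Matrix (Fin n) (Fin n) K) (α η : Fin n → K)
    (F : Matrix (Fin nf) (Fin n) K)
    (hind : LinearIndependent K (fun i => F i))
    (hspan : Submodule.span K (Set.range fun i => F i) =
      Submodule.span K (Set.range fun w : List Sig => Matrix.vecMul α ((w.map M).prod)))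
    (Mf : Sig → Matrix (Fin nf) (Fin nf) K)
    (hM : ∀ a : Sig, F * M a = Mf a * F)
    (αf : Fin nf → K) (hα : Matrix.vecMul αf F = α) :
    Submodule.span K (Set.range fun w : List Sig => Matrix.vecMul αf ((w.map Mf).prod)) = ⊤ := by
  -- Key intertwining: F * M(w) = Mf(w) * F
  have key : ∀ w : List Sig, F * (w.map M).prod = (w.map Mf).prod * F := by
    intro w
    induction w with
    | nil => simp
    | cons a t ih =>
      simp only [List.map_cons, List.prod_cons, ← Matrix.mul_assoc, hM a]
      rw [Matrix.mul_assoc, ih, Matrix.mul_assoc]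
  -- hence αf Mf(w) F = α M(w)
  have key2 : ∀ w : List Sig,
      Matrix.vecMul (Matrix.vecMul αf ((w.map Mf).prod)) F = Matrix.vecMul α ((w.map M).prod) := by
    intro w
    rw [Matrix.vecMul_vecMul, ← key, ← Matrix.vecMul_vecMul, hα]
  -- consider the injective linear map v ↦ v ᵥ* F
  set φ := F.vecMulLinear with hφ
  have hinj : Function.Injective φ := by
    rw [hφ, Matrix.coe_vecMulLinear]
    exact Matrix.vecMul_injective_iff.mpr hind
  have hmap : Submodule.map φ
      (Submodule.span K (Set.range fun w : List Sig => Matrix.vecMul αf ((w.map Mf).prod)))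
      = Submodule.map φ (⊤ : Submodule K (Fin nf → K)) := by
    rw [Submodule.map_span]
    have : φ '' (Set.range fun w : List Sig => Matrix.vecMul αf ((w.map Mf).prod))
        = Set.range fun w : List Sig => Matrix.vecMul α ((w.map M).prod) := by
      rw [← Set.range_comp]
      ext x
      simp only [Set.mem_range, Function.comp_apply, hφ, Matrix.vecMulLinear_apply]
      constructor
      · rintro ⟨w, rfl⟩; exact ⟨w, (key2 w).symm⟩
      · rintro ⟨w, rfl⟩; exact ⟨w, key2 w⟩
    rw [this, ← hspan, ← LinearMap.range_eq_map, hφ]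
    exact (range_vecMulLinear F).symm
  exact Submodule.map_injective_of_injective hinj hmap
end

section
/- A backward conjugate of a forward-minimal automaton is minimal: if A is forward-minimal with n states and B ∈ K^{n×n⃖} is a matrix whose columns form a basis of the backward space of A, then n⃖ equals the rank of the Hankel matrix of ⟦A⟧; consequently no automaton with fewer than n⃖ states realizes ⟦A⟧. -/
open Matrix

private lemma toDual_basisFun {K : Type*} [Field K] {n : ℕ} (v u : Fin n → K) :
    (Pi.basisFun K (Fin n)).toDual v u = v ⬝ᵥ u := by
  have hu : u = ∑ i, u i • (Pi.basisFun K (Fin n)) i := by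
    funext j
    rw [Finset.sum_apply]
    simp [Pi.basisFun_apply, Pi.single_apply]
  conv_lhs => rw [hu]
  rw [map_sum]
  simp only [_root_.map_smul, Module.Basis.toDual_apply_left, Pi.basisFun_repr, smul_eq_mul]
  simp [dotProduct, mul_comm]

/-- A backward conjugate of a forward-minimal automaton is minimal:
if `A` is forward-minimal with `n` states and the columns of `B ∈ K^{n×n⃖}`
form a basis of the backward space of `A`, then `n⃖` equals the rank of the
Hankel matrix of `⟦A⟧`, and consequently no automaton with fewer than `n⃖`
states realizes `⟦A⟧`. -/
theorem backward_conjugate_of_forward_minimal_minimal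
    (K : Type*) [Field K] (Sig : Type*) [Fintype Sig]
    (n nb : ℕ) (M : Sig → Matrix (Fin n) (Fin n) K) (α η : Fin n → K)
    (hfwd : Submodule.span K
      (Set.range fun w : List Sig => Matrix.vecMul α ((w.map M).prod)) = ⊤)
    (B : Matrix (Fin n) (Fin nb) K)
    (hind : LinearIndependent K (fun j => fun i => B i j))
    (hspan : Submodule.span K (Set.range fun j => fun i => B i j) =
      Submodule.span K (Set.range fun w : List Sig => ((w.map M).prod).mulVec η)) :
    (nb : Cardinal) = Module.rank K
        (Submodule.span K (Set.range fun x : List Sig =>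
          fun y : List Sig => Matrix.vecMul α (((x ++ y).map M).prod) ⬝ᵥ η)) ∧
    (∀ (m : ℕ) (M' : Sig → Matrix (Fin m) (Fin m) K) (α' η' : Fin m → K),
      (∀ w : List Sig,
        Matrix.vecMul α' ((w.map M').prod) ⬝ᵥ η' = Matrix.vecMul α ((w.map M).prod) ⬝ᵥ η) →
      nb ≤ m) := by
  classical
  -- the linear map sending a forward vector to the corresponding Hankel row
  set φ : (Fin n → K) →ₗ[K] (List Sig → K) :=
    { toFun := fun v => fun y => v ⬝ᵥ ((y.map M).prod).mulVec η
      map_add' := by intro u v; funext y; simp [add_dotProduct]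
      map_smul' := by intro c v; funext y; simp [smul_dotProduct] } with hφ
  -- the Hankel row space is the range of φ
  have hrow : ∀ x : List Sig,
      (fun y : List Sig => Matrix.vecMul α (((x ++ y).map M).prod) ⬝ᵥ η)
        = φ (Matrix.vecMul α ((x.map M).prod)) := by
    intro x; funext y
    simp [hφ, dotProduct_mulVec, List.prod_append, Matrix.vecMul_vecMul]
  have himg : (Set.range fun x : List Sig =>
      fun y : List Sig => Matrix.vecMul α (((x ++ y).map M).prod) ⬝ᵥ η)
      = φ '' (Set.range fun w : List Sig => Matrix.vecMul α ((w.map M).prod)) := by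
    have hcomp : (fun x : List Sig =>
        fun y : List Sig => Matrix.vecMul α (((x ++ y).map M).prod) ⬝ᵥ η)
        = φ ∘ (fun w : List Sig => Matrix.vecMul α ((w.map M).prod)) := funext hrow
    rw [hcomp, Set.range_comp]
  set V := Submodule.span K (Set.range fun x : List Sig =>
      fun y : List Sig => Matrix.vecMul α (((x ++ y).map M).prod) ⬝ᵥ η) with hV
  have hVrange : V = LinearMap.range φ := by
    rw [hV, himg, Submodule.span_image, hfwd, Submodule.map_top]
  -- the backward space and its dimension
  set W := Submodule.span K
      (Set.range fun w : List Sig => ((w.map M).prod).mulVec η) with hW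
  have hWrank : Module.finrank K W = nb := by
    have h := finrank_span_eq_card hind
    rw [hspan] at h
    simpa using h
  -- identify the kernel of φ with the dual annihilator of W
  set e := (Pi.basisFun K (Fin n)).toDualEquiv with he
  have heval : ∀ v u : Fin n → K, e v u = v ⬝ᵥ u := by
    intro v u
    exact toDual_basisFun v u
  have hker : LinearMap.ker φ = Submodule.comap (e : (Fin n → K) →ₗ[K] _)
      W.dualAnnihilator := by
    ext v
    simp only [LinearMap.mem_ker, Submodule.mem_comap, LinearEquiv.coe_coe,
      Submodule.mem_dualAnnihilator]
    constructor
    · intro h w hw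
      have hgen : ∀ u ∈ (Set.range fun w : List Sig => ((w.map M).prod).mulVec η),
          (e v) u = 0 := by
        rintro u ⟨y, rfl⟩
        have := congrFun h y
        rw [heval]
        simpa [hφ] using this
      have hle : W ≤ LinearMap.ker (e v) := by
        rw [hW, Submodule.span_le]
        intro u hu
        exact hgen u hu
      exact hle hw
    · intro h
      funext y
      have := h (((y.map M).prod).mulVec η) (Submodule.subset_span ⟨y, rfl⟩)
      rw [heval] at this
      simpa [hφ] using this
  -- dimension count
  have hkerrank : Module.finrank K (LinearMap.ker φ)
      = Module.finrank K W.dualAnnihilator := by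
    rw [hker]
    exact LinearEquiv.finrank_eq (LinearEquiv.ofSubmodule' e W.dualAnnihilator)
  have hann : Module.finrank K W.dualAnnihilator
      = Module.finrank K ((Fin n → K) ⧸ W) :=
    (LinearEquiv.finrank_eq (Subspace.quotEquivAnnihilator W)).symm
  have hq : Module.finrank K ((Fin n → K) ⧸ W) + Module.finrank K W = n := by
    rw [Submodule.finrank_quotient_add_finrank]
    simp
  have hrn : Module.finrank K (LinearMap.range φ)
      + Module.finrank K (LinearMap.ker φ) = n := by
    rw [LinearMap.finrank_range_add_finrank_ker]
    simp
  have hrange : Module.finrank K (LinearMap.range φ) = nb := by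
    rw [hkerrank, hann] at hrn
    omega
  have hVfin : Module.finrank K V = nb := by rw [hVrange]; exact hrange
  have hfinite : Module.Finite K V := by
    rw [hVrange]; infer_instance
  have hfirst : (nb : Cardinal) = Module.rank K V := by
    rw [← hVfin]
    exact Module.finrank_eq_rank K V
  refine ⟨hfirst, ?_⟩
  -- rank lower bound
  intro m M' α' η' hreal
  set g : Fin m → (List Sig → K) :=
    fun i => fun y => (((y.map M').prod).mulVec η') i with hg
  have hsub : V ≤ Submodule.span K (Set.range g) := by
    rw [hV, Submodule.span_le]
    rintro - ⟨x, rfl⟩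
    have hx : (fun y : List Sig => Matrix.vecMul α (((x ++ y).map M).prod) ⬝ᵥ η)
        = ∑ i, (Matrix.vecMul α' ((x.map M').prod)) i • g i := by
      funext y
      rw [← hreal (x ++ y), List.map_append, List.prod_append,
        ← Matrix.vecMul_vecMul, ← dotProduct_mulVec]
      simp [dotProduct, hg]
    show (fun y : List Sig => Matrix.vecMul α (((x ++ y).map M).prod) ⬝ᵥ η)
        ∈ Submodule.span K (Set.range g)
    rw [hx]
    exact Submodule.sum_mem _ fun i _ =>
      Submodule.smul_mem _ _ (Submodule.subset_span ⟨i, rfl⟩)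
  have hgfin : Module.Finite K (Submodule.span K (Set.range g)) :=
    FiniteDimensional.span_of_finite K (Set.finite_range g)
  have hle : Module.finrank K V ≤ m := by
    calc Module.finrank K V
        ≤ Module.finrank K (Submodule.span K (Set.range g)) :=
          Submodule.finrank_mono hsub
      _ ≤ Fintype.card (Fin m) := finrank_range_le_card g
      _ = m := Fintype.card_fin m
  rw [hVfin] at hle
  exact hle
end

section
/- Two minimal equivalent automata are conjugate: if A₁ and A₂ are minimal automata (necessarily with the same number n of states) with ⟦A₁⟧ = ⟦A₂⟧, then there exists an invertible matrix Q ∈ K^{n×n} with α₁ = α₂ Q, η₂ = Q η₁, and Q M₁(a) = M₂(a) Q for all a ∈ Σ. -/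
open Matrix

section AuxConjugate

variable {K : Type*} [Field K] {Sig : Type*} {n : ℕ}

private lemma span_dot_eq' {S : Set (Fin n → K)} (hS : Submodule.span K S = ⊤)
    {v v' : Fin n → K} (h : ∀ x ∈ S, x ⬝ᵥ v = x ⬝ᵥ v') : v = v' := by
  have hall : ∀ x : Fin n → K, x ⬝ᵥ v = x ⬝ᵥ v' := by
    intro x
    have hx : x ∈ Submodule.span K S := hS ▸ Submodule.mem_top
    induction hx using Submodule.span_induction with
    | mem x hx => exact h x hx
    | zero => simp
    | add a b _ _ ha hb => simp [add_dotProduct, ha, hb]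
    | smul c a _ ha => simp [smul_dotProduct, ha]
  funext i
  simpa using hall (Pi.single i 1)

private lemma span_mulVec_eq' {S : Set (Fin n → K)} (hS : Submodule.span K S = ⊤)
    {A B : Matrix (Fin n) (Fin n) K} (h : ∀ x ∈ S, A *ᵥ x = B *ᵥ x) : A = B := by
  have hall : ∀ x : Fin n → K, A *ᵥ x = B *ᵥ x := by
    intro x
    have hx : x ∈ Submodule.span K S := hS ▸ Submodule.mem_top
    induction hx using Submodule.span_induction with
    | mem x hx => exact h x hx
    | zero => simp
    | add a b _ _ ha hb => simp [mulVec_add, ha, hb]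
    | smul c a _ ha => simp [mulVec_smul, ha]
  ext i j
  have := congrFun (hall (Pi.single j 1)) i
  simpa [mulVec_single] using this

private lemma fwd_span_top' (M : Sig → Matrix (Fin n) (Fin n) K) (α η : Fin n → K)
    (hmin : ∀ (m : ℕ) (M' : Sig → Matrix (Fin m) (Fin m) K) (α' η' : Fin m → K),
      (∀ w : List Sig,
        α' ᵥ* ((w.map M').prod) ⬝ᵥ η' = α ᵥ* ((w.map M).prod) ⬝ᵥ η) → n ≤ m) :
    Submodule.span K (Set.range fun w : List Sig => α ᵥ* (w.map M).prod) = ⊤ := by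
  by_contra hne
  set F := Submodule.span K (Set.range fun w : List Sig => α ᵥ* (w.map M).prod) with hF
  have hmlt : Module.finrank K F < n := by
    have := Submodule.finrank_lt (K := K) (V := Fin n → K) hne
    simpa [Module.finrank_fin_fun] using this
  set m := Module.finrank K F with hm
  have hinv : ∀ x ∈ F, ∀ a : Sig, x ᵥ* M a ∈ F := by
    intro x hx a
    induction hx using Submodule.span_induction with
    | mem x hx =>
      obtain ⟨w, rfl⟩ := hx
      refine Submodule.subset_span ⟨w ++ [a], ?_⟩
      simp [List.prod_append, vecMul_vecMul]
    | zero => simp [zero_vecMul]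
    | add a b _ _ ha hb => simpa [add_vecMul] using Submodule.add_mem _ ha hb
    | smul c a _ ha => simpa [smul_vecMul] using Submodule.smul_mem _ c ha
  have hαF : α ∈ F := Submodule.subset_span ⟨[], by simp⟩
  let b : Module.Basis (Fin m) K F := Module.finBasis K F
  let P : Matrix (Fin m) (Fin n) K := Matrix.of fun i => (b i : Fin n → K)
  let N : Sig → Matrix (Fin m) (Fin m) K := fun a =>
    Matrix.of fun i j => b.repr ⟨(b i : Fin n → K) ᵥ* M a, hinv _ (b i).2 a⟩ j
  have hrepr : ∀ (x : F) (k : Fin n),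
      (∑ j, b.repr x j * (b j : Fin n → K) k) = (x : Fin n → K) k := by
    intro x k
    have hx := b.sum_repr x
    calc (∑ j, b.repr x j * (b j : Fin n → K) k)
        = ((∑ j, b.repr x j • b j : F) : Fin n → K) k := by
          rw [Submodule.coe_sum]; simp [Finset.sum_apply]
      _ = (x : Fin n → K) k := by rw [hx]
  have hNP : ∀ a : Sig, N a * P = P * M a := by
    intro a
    ext i k
    have h1 := hrepr ⟨(b i : Fin n → K) ᵥ* M a, hinv _ (b i).2 a⟩ k
    simp only [Matrix.mul_apply]
    rw [show (∑ j, N a i j * P j k)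
        = ∑ j, b.repr ⟨(b i : Fin n → K) ᵥ* M a, hinv _ (b i).2 a⟩ j * (b j : Fin n → K) k
        from rfl, h1]
    simp [vecMul, dotProduct, P]
  have hprod : ∀ w : List Sig, (w.map N).prod * P = P * (w.map M).prod := by
    intro w
    induction w with
    | nil => simp
    | cons a w ih =>
      simp only [List.map_cons, List.prod_cons]
      rw [Matrix.mul_assoc, ih, ← Matrix.mul_assoc, hNP, Matrix.mul_assoc]
  let β : Fin m → K := b.repr ⟨α, hαF⟩
  have hβP : β ᵥ* P = α := by
    funext k
    have := hrepr ⟨α, hαF⟩ k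
    simpa [vecMul, dotProduct, P, β] using this
  have := hmin m N β (P *ᵥ η) ?_
  · omega
  intro w
  rw [dotProduct_mulVec, vecMul_vecMul, hprod, ← vecMul_vecMul, hβP]

private lemma prod_map_transpose' (M : Sig → Matrix (Fin n) (Fin n) K) (w : List Sig) :
    ((w.map fun a => (M a)ᵀ).prod) = ((w.reverse.map M).prod)ᵀ := by
  induction w with
  | nil => simp
  | cons a w ih => simp [List.prod_append, ih, Matrix.transpose_mul]

private lemma transp_sem' (M : Sig → Matrix (Fin n) (Fin n) K) (α η : Fin n → K) (w : List Sig) :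
    η ᵥ* ((w.map fun a => (M a)ᵀ).prod) ⬝ᵥ α = α ᵥ* ((w.reverse.map M).prod) ⬝ᵥ η := by
  rw [prod_map_transpose', vecMul_transpose, dotProduct_comm, dotProduct_mulVec]

private lemma bwd_span_top' (M : Sig → Matrix (Fin n) (Fin n) K) (α η : Fin n → K)
    (hmin : ∀ (m : ℕ) (M' : Sig → Matrix (Fin m) (Fin m) K) (α' η' : Fin m → K),
      (∀ w : List Sig,
        α' ᵥ* ((w.map M').prod) ⬝ᵥ η' = α ᵥ* ((w.map M).prod) ⬝ᵥ η) → n ≤ m) :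
    Submodule.span K (Set.range fun w : List Sig => (w.map M).prod *ᵥ η) = ⊤ := by
  have hminT : ∀ (m : ℕ) (M' : Sig → Matrix (Fin m) (Fin m) K) (α' η' : Fin m → K),
      (∀ w : List Sig,
        α' ᵥ* ((w.map M').prod) ⬝ᵥ η' = η ᵥ* ((w.map fun a => (M a)ᵀ).prod) ⬝ᵥ α) → n ≤ m := by
    intro m M' α' η' h
    refine hmin m (fun a => (M' a)ᵀ) η' α' ?_
    intro w
    rw [transp_sem' M' α' η' w, h w.reverse, transp_sem' M α η w.reverse, List.reverse_reverse]
  have hfwd := fwd_span_top' (fun a => (M a)ᵀ) η α hminT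
  have hr : (Set.range fun w : List Sig => η ᵥ* ((w.map fun a => (M a)ᵀ).prod))
      = Set.range fun w : List Sig => (w.map M).prod *ᵥ η := by
    ext x
    constructor
    · rintro ⟨w, rfl⟩
      exact ⟨w.reverse, by
        simp only [prod_map_transpose', vecMul_transpose, List.reverse_reverse]⟩
    · rintro ⟨w, rfl⟩
      exact ⟨w.reverse, by
        simp only [prod_map_transpose', vecMul_transpose, List.reverse_reverse]⟩
  rwa [hr] at hfwd

private lemma isUnit_colMatrix' (b : Module.Basis (Fin n) K (Fin n → K)) :
    IsUnit (Matrix.of fun i j => (b j) i : Matrix (Fin n) (Fin n) K) := by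
  have h : (Matrix.of fun i j => (b j) i : Matrix (Fin n) (Fin n) K)
      = (Pi.basisFun K (Fin n)).toMatrix ⇑b := by
    ext i j
    simp [Module.Basis.toMatrix_apply]
  rw [h]
  have := (Pi.basisFun K (Fin n)).invertibleToMatrix b
  exact isUnit_of_invertible _

private lemma exists_basis_words' (g : List Sig → (Fin n → K))
    (hg : Submodule.span K (Set.range g) = ⊤) :
    ∃ (v : Fin n → List Sig), ∃ b : Module.Basis (Fin n) K (Fin n → K),
      ∀ j, (b j : Fin n → K) = g (v j) := by
  obtain ⟨s, hst, hsp, hli⟩ := exists_linearIndependent K (Set.range g)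
  rw [hg] at hsp
  let b0 : Module.Basis s K (Fin n → K) := Module.Basis.mk hli (by rw [← hsp]; simp [Submodule.span_le])
  haveI : Fintype s := FiniteDimensional.fintypeBasisIndex b0
  have hcard : Fintype.card s = n := by
    have := Module.finrank_eq_card_basis b0
    rw [Module.finrank_fin_fun] at this
    omega
  let e : Fin n ≃ s := (Fintype.equivFinOfCardEq hcard).symm
  have hmem : ∀ j : Fin n, (e j : Fin n → K) ∈ Set.range g := fun j => hst (e j).2
  choose v hv using hmem
  refine ⟨v, b0.reindex e.symm, ?_⟩
  intro j
  rw [Module.Basis.reindex_apply, Equiv.symm_symm, hv j]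
  simp [b0, Module.Basis.mk_apply]

end AuxConjugate

/-- Two minimal equivalent automata are conjugate: if `A₁, A₂` are
minimal automata with the same number `n` of states and `⟦A₁⟧ = ⟦A₂⟧`, then
there is an invertible `Q ∈ K^{n×n}` with `α₁ = α₂ Q`, `η₂ = Q η₁`, and
`Q M₁(a) = M₂(a) Q` for all letters `a`. -/
theorem minimal_equivalent_conjugate (K : Type*) [Field K] (Sig : Type*) [Fintype Sig]
    (n : ℕ)
    (M₁ : Sig → Matrix (Fin n) (Fin n) K) (α₁ η₁ : Fin n → K)
    (M₂ : Sig → Matrix (Fin n) (Fin n) K) (α₂ η₂ : Fin n → K)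
    (hmin₁ : ∀ (m : ℕ) (M' : Sig → Matrix (Fin m) (Fin m) K) (α' η' : Fin m → K),
      (∀ w : List Sig,
        Matrix.vecMul α' ((w.map M').prod) ⬝ᵥ η' = Matrix.vecMul α₁ ((w.map M₁).prod) ⬝ᵥ η₁) →
      n ≤ m)
    (hmin₂ : ∀ (m : ℕ) (M' : Sig → Matrix (Fin m) (Fin m) K) (α' η' : Fin m → K),
      (∀ w : List Sig,
        Matrix.vecMul α' ((w.map M').prod) ⬝ᵥ η' = Matrix.vecMul α₂ ((w.map M₂).prod) ⬝ᵥ η₂) →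
      n ≤ m)
    (heq : ∀ w : List Sig,
      Matrix.vecMul α₁ ((w.map M₁).prod) ⬝ᵥ η₁ = Matrix.vecMul α₂ ((w.map M₂).prod) ⬝ᵥ η₂) :
    ∃ Q : Matrix (Fin n) (Fin n) K, IsUnit Q ∧
      α₁ = Matrix.vecMul α₂ Q ∧ η₂ = Q.mulVec η₁ ∧ ∀ a : Sig, Q * M₁ a = M₂ a * Q := by
  classical
  set g₁ : List Sig → (Fin n → K) := fun w => (w.map M₁).prod *ᵥ η₁ with hg₁
  set g₂ : List Sig → (Fin n → K) := fun w => (w.map M₂).prod *ᵥ η₂ with hg₂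
  set f₁ : List Sig → (Fin n → K) := fun u => α₁ ᵥ* (u.map M₁).prod with hf₁def
  set f₂ : List Sig → (Fin n → K) := fun u => α₂ ᵥ* (u.map M₂).prod with hf₂def
  have hcross : ∀ u w : List Sig, f₁ u ⬝ᵥ g₁ w = f₂ u ⬝ᵥ g₂ w := by
    intro u w
    have h1 : f₁ u ⬝ᵥ g₁ w = α₁ ᵥ* (((u ++ w).map M₁).prod) ⬝ᵥ η₁ := by
      rw [hf₁def, hg₁]
      simp only [dotProduct_mulVec, vecMul_vecMul, List.map_append, List.prod_append]
    have h2 : f₂ u ⬝ᵥ g₂ w = α₂ ᵥ* (((u ++ w).map M₂).prod) ⬝ᵥ η₂ := by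
      rw [hf₂def, hg₂]
      simp only [dotProduct_mulVec, vecMul_vecMul, List.map_append, List.prod_append]
    rw [h1, h2, heq]
  have hb₁ : Submodule.span K (Set.range g₁) = ⊤ := bwd_span_top' M₁ α₁ η₁ hmin₁
  have hb₂ : Submodule.span K (Set.range g₂) = ⊤ := bwd_span_top' M₂ α₂ η₂ hmin₂
  have hf₂ : Submodule.span K (Set.range f₂) = ⊤ := fwd_span_top' M₂ α₂ η₂ hmin₂
  obtain ⟨v, b, hvb⟩ := exists_basis_words' g₁ hb₁
  set B₁ : Matrix (Fin n) (Fin n) K := Matrix.of fun i j => g₁ (v j) i with hB₁def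
  set B₂ : Matrix (Fin n) (Fin n) K := Matrix.of fun i j => g₂ (v j) i with hB₂def
  have hB₁unit : IsUnit B₁ := by
    have : B₁ = (Matrix.of fun i j => (b j) i : Matrix (Fin n) (Fin n) K) := by
      ext i j; simp [hB₁def, hvb j]
    rw [this]
    exact isUnit_colMatrix' b
  have hB₁inv : B₁ * B₁⁻¹ = 1 :=
    Matrix.mul_nonsing_inv _ ((Matrix.isUnit_iff_isUnit_det B₁).mp hB₁unit)
  have hBB : ∀ x : Fin n → K, B₁ *ᵥ (B₁⁻¹ *ᵥ x) = x := by
    intro x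
    rw [mulVec_mulVec, hB₁inv, one_mulVec]
  set Q : Matrix (Fin n) (Fin n) K := B₂ * B₁⁻¹ with hQdef
  -- key2 : Q maps backward vectors of A₁ to those of A₂
  have key2 : ∀ w : List Sig, Q *ᵥ g₁ w = g₂ w := by
    intro w
    refine span_dot_eq' hf₂ ?_
    rintro x ⟨u, rfl⟩
    have hc1 : f₂ u ᵥ* B₂ = f₁ u ᵥ* B₁ := by
      funext j
      show f₂ u ⬝ᵥ (fun i => B₂ i j) = f₁ u ⬝ᵥ (fun i => B₁ i j)
      have e2 : (fun i => B₂ i j) = g₂ (v j) := rfl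
      have e1 : (fun i => B₁ i j) = g₁ (v j) := rfl
      rw [e1, e2, hcross]
    calc f₂ u ⬝ᵥ (Q *ᵥ g₁ w)
        = f₂ u ⬝ᵥ (B₂ *ᵥ (B₁⁻¹ *ᵥ g₁ w)) := by rw [hQdef, ← mulVec_mulVec]
      _ = (f₂ u ᵥ* B₂) ⬝ᵥ (B₁⁻¹ *ᵥ g₁ w) := by rw [dotProduct_mulVec]
      _ = (f₁ u ᵥ* B₁) ⬝ᵥ (B₁⁻¹ *ᵥ g₁ w) := by rw [hc1]
      _ = f₁ u ⬝ᵥ (B₁ *ᵥ (B₁⁻¹ *ᵥ g₁ w)) := (dotProduct_mulVec _ _ _).symm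
      _ = f₁ u ⬝ᵥ g₁ w := by rw [hBB]
      _ = f₂ u ⬝ᵥ g₂ w := hcross u w
  -- key1 : forward vectors are related by Q
  have key1 : ∀ u : List Sig, f₁ u = f₂ u ᵥ* Q := by
    intro u
    refine span_dot_eq' hb₁ ?_
    rintro x ⟨w, rfl⟩
    calc g₁ w ⬝ᵥ f₁ u = f₁ u ⬝ᵥ g₁ w := dotProduct_comm _ _
      _ = f₂ u ⬝ᵥ g₂ w := hcross u w
      _ = f₂ u ⬝ᵥ (Q *ᵥ g₁ w) := by rw [key2 w]
      _ = (f₂ u ᵥ* Q) ⬝ᵥ g₁ w := dotProduct_mulVec _ _ _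
      _ = g₁ w ⬝ᵥ (f₂ u ᵥ* Q) := dotProduct_comm _ _
  -- IsUnit Q via surjectivity of mulVec
  have hsurj : ∀ y : Fin n → K, ∃ x, Q *ᵥ x = y := by
    have hle : Submodule.span K (Set.range g₂) ≤ LinearMap.range Q.mulVecLin := by
      rw [Submodule.span_le]
      rintro y ⟨w, rfl⟩
      exact ⟨g₁ w, by simpa [Matrix.mulVecLin_apply] using key2 w⟩
    rw [hb₂, top_le_iff] at hle
    intro y
    have : y ∈ LinearMap.range Q.mulVecLin := hle ▸ Submodule.mem_top
    obtain ⟨x, hx⟩ := this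
    exact ⟨x, by simpa [Matrix.mulVecLin_apply] using hx⟩
  have hQunit : IsUnit Q := by
    choose c hc using fun j => hsurj (Pi.single j 1)
    set C : Matrix (Fin n) (Fin n) K := Matrix.of fun i j => c j i with hCdef
    have hQC : Q * C = 1 := by
      ext i j
      have := congrFun (hc j) i
      simp only [Matrix.mulVec, dotProduct] at this
      simp only [Matrix.mul_apply, hCdef, Matrix.of_apply, Matrix.one_apply]
      rw [this]
      simp [Pi.single_apply, eq_comm]
    exact ⟨⟨Q, C, hQC, mul_eq_one_comm.mp hQC⟩, rfl⟩
  refine ⟨Q, hQunit, ?_, ?_, ?_⟩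
  · have := key1 []
    simpa [hf₁def, hf₂def] using this
  · have := key2 []
    simpa [hg₁, hg₂] using this.symm
  · intro a
    refine span_mulVec_eq' hb₁ ?_
    rintro x ⟨w, rfl⟩
    have h1 : M₁ a *ᵥ g₁ w = g₁ (a :: w) := by
      rw [hg₁]; simp [mulVec_mulVec]
    have h2 : M₂ a *ᵥ g₂ w = g₂ (a :: w) := by
      rw [hg₂]; simp [mulVec_mulVec]
    calc (Q * M₁ a) *ᵥ g₁ w = Q *ᵥ (M₁ a *ᵥ g₁ w) := (mulVec_mulVec _ _ _).symm
      _ = Q *ᵥ g₁ (a :: w) := by rw [h1]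
      _ = g₂ (a :: w) := key2 _
      _ = M₂ a *ᵥ (Q *ᵥ g₁ w) := by rw [key2 w, h2]
      _ = (M₂ a * Q) *ᵥ g₁ w := mulVec_mulVec _ _ _
end

section
/- Let s be a series of rank n with Hankel matrix H and let C = {c₁,…,c_n} be complete. Then the Hankel automaton Ā = (n, Σ, M̄, H[ε,C], η_ε) satisfies H[·,C] M̄(w) = H[·, wC] for all words w ∈ Σ*, and ⟦Ā⟧ = s; moreover Ā is minimal. -/
open Matrix

/-- Let `s` be a series of Hankel rank `n` and `C = {c₁,…,c_n}` a
complete set (the columns `H[·,C]` form a basis of the column space of the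
Hankel matrix `H`). The Hankel automaton `Ā = (n, Σ, M̄, H[ε,C], η_ε)` satisfies
`H[·,C] M̄(w) = H[·,wC]` for all words `w`, realizes `s`, and is minimal. -/
theorem hankel_automaton (K : Type*) [Field K] (Sig : Type*) [Fintype Sig]
    (s : List Sig → K) (n : ℕ)
    (hrank : Module.rank K
      (Submodule.span K (Set.range fun y : List Sig => fun x : List Sig => s (x ++ y))) = n)
    (C : Fin n → List Sig)
    (hind : LinearIndependent K (fun j => fun x : List Sig => s (x ++ C j)))
    (hspanC : Submodule.span K (Set.range fun j => fun x : List Sig => s (x ++ C j)) =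
      Submodule.span K (Set.range fun y : List Sig => fun x : List Sig => s (x ++ y)))
    (ηε : Fin n → K)
    (hηε : ∀ x : List Sig, s x = ∑ j, s (x ++ C j) * ηε j)
    (Mb : Sig → Matrix (Fin n) (Fin n) K)
    (hMb : ∀ (a : Sig) (x : List Sig) (j : Fin n),
      s (x ++ (a :: C j)) = ∑ i, s (x ++ C i) * Mb a i j) :
    (∀ (w : List Sig) (x : List Sig) (j : Fin n),
      s (x ++ (w ++ C j)) = ∑ i, s (x ++ C i) * ((w.map Mb).prod) i j) ∧
    (∀ w : List Sig,
      Matrix.vecMul (fun i => s (C i)) ((w.map Mb).prod) ⬝ᵥ ηε = s w) ∧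
    (∀ (m : ℕ) (M' : Sig → Matrix (Fin m) (Fin m) K) (α' η' : Fin m → K),
      (∀ w : List Sig, Matrix.vecMul α' ((w.map M').prod) ⬝ᵥ η' = s w) → n ≤ m) := by
  classical
  have part1 : ∀ (w : List Sig) (x : List Sig) (j : Fin n),
      s (x ++ (w ++ C j)) = ∑ i, s (x ++ C i) * ((w.map Mb).prod) i j := by
    intro w
    induction w with
    | nil =>
      intro x j
      simp [Matrix.one_apply]
    | cons a w ih =>
      intro x j
      have h1 : x ++ (a :: w ++ C j) = (x ++ [a]) ++ (w ++ C j) := by simp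
      rw [h1, ih]
      simp only [List.map_cons, List.prod_cons, Matrix.mul_apply]
      calc ∑ i, s (x ++ [a] ++ C i) * ((w.map Mb).prod) i j
          = ∑ i, (∑ k, s (x ++ C k) * Mb a k i) * ((w.map Mb).prod) i j := by
            refine Finset.sum_congr rfl fun i _ => ?_
            congr 1
            have := hMb a x i
            simpa using this
        _ = ∑ k, s (x ++ C k) * ∑ i, Mb a k i * ((w.map Mb).prod) i j := by
            simp only [Finset.sum_mul, Finset.mul_sum, mul_assoc]
            exact Finset.sum_comm
  refine ⟨part1, ?_, ?_⟩
  · intro w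
    have hcol : ∀ j, Matrix.vecMul (fun i => s (C i)) ((w.map Mb).prod) j = s (w ++ C j) := by
      intro j
      have := part1 w [] j
      simp only [List.nil_append] at this
      simp [Matrix.vecMul, dotProduct, this]
    have : Matrix.vecMul (fun i => s (C i)) ((w.map Mb).prod) ⬝ᵥ ηε
        = ∑ j, s (w ++ C j) * ηε j := by
      simp [dotProduct, hcol]
    rw [this, ← hηε w]
  · intro m M' α' η' hreal
    let L : (Fin m → K) →ₗ[K] (List Sig → K) :=
      { toFun := fun v => fun x => Matrix.vecMul α' ((x.map M').prod) ⬝ᵥ v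
        map_add' := by intro u v; funext x; simp
        map_smul' := by intro c v; funext x; simp }
    have key : ∀ j, (fun x => s (x ++ C j)) = L (((C j).map M').prod *ᵥ η') := by
      intro j
      funext x
      have h := hreal (x ++ C j)
      rw [← h]
      simp only [L, LinearMap.coe_mk, AddHom.coe_mk, List.map_append, List.prod_append,
        ← Matrix.vecMul_vecMul, Matrix.dotProduct_mulVec]
    have hind' : LinearIndependent K (fun j => (((C j).map M').prod *ᵥ η')) := by
      apply LinearIndependent.of_comp L
      have : (⇑L ∘ fun j => ((C j).map M').prod *ᵥ η')
          = fun j => fun x : List Sig => s (x ++ C j) := by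
        funext j; exact (key j).symm
      rw [this]; exact hind
    have hc := hind'.fintype_card_le_finrank
    simpa using hc
end

section
/- A series s : Σ* → K has Hankel rank at most n if and only if there exists a weighted automaton with at most n states whose semantics equals s. -/
open Matrix Cardinal

section Aux

variable {K : Type*} [Field K] {Sig : Type*}

/-- Left shift by a letter, as a linear map on the function space. -/
def shiftT (K : Type*) [Field K] (Sig : Type*) (a : Sig) :
    (List Sig → K) →ₗ[K] (List Sig → K) where
  toFun f := fun y => f (a :: y)
  map_add' _ _ := rfl
  map_smul' _ _ := rfl

lemma shift_mem (s : List Sig → K) (a : Sig) :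
    ∀ f ∈ Submodule.span K (Set.range fun x : List Sig => fun y : List Sig => s (x ++ y)),
      shiftT K Sig a f ∈
        Submodule.span K (Set.range fun x : List Sig => fun y : List Sig => s (x ++ y)) := by
  intro f hf
  have h : Submodule.span K (Set.range fun x : List Sig => fun y : List Sig => s (x ++ y)) ≤
      Submodule.comap (shiftT K Sig a)
        (Submodule.span K (Set.range fun x : List Sig => fun y : List Sig => s (x ++ y))) := by
    rw [Submodule.span_le]
    rintro _ ⟨x, rfl⟩
    show (shiftT K Sig a) (fun y => s (x ++ y)) ∈
      Submodule.span K (Set.range fun x : List Sig => fun y : List Sig => s (x ++ y))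
    have hx : shiftT K Sig a (fun y => s (x ++ y)) = fun y => s ((x ++ [a]) ++ y) := by
      funext y
      simp [shiftT, List.append_assoc]
    rw [hx]
    exact Submodule.subset_span ⟨x ++ [a], rfl⟩
  exact h hf

end Aux

/-- A series `s : Σ* → K` has Hankel rank at most `n` iff there
is a weighted automaton with at most `n` states whose semantics equals `s`. -/
theorem rank_le_iff_automaton (K : Type*) [Field K] (Sig : Type*) [Fintype Sig]
    (s : List Sig → K) (n : ℕ) :
    Module.rank K
        (Submodule.span K (Set.range fun x : List Sig => fun y : List Sig => s (x ++ y))) ≤ n ↔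
      ∃ (m : ℕ), m ≤ n ∧ ∃ (M : Sig → Matrix (Fin m) (Fin m) K) (α η : Fin m → K),
        ∀ w : List Sig, Matrix.vecMul α ((w.map M).prod) ⬝ᵥ η = s w := by
  classical
  set V : Submodule K (List Sig → K) :=
    Submodule.span K (Set.range fun x : List Sig => fun y : List Sig => s (x ++ y)) with hV
  constructor
  · intro hrank
    haveI : Module.Free K V := Module.Free.of_divisionRing K V
    haveI : Module.Finite K V :=
      Module.rank_lt_aleph0_iff.mp (lt_of_le_of_lt hrank (Cardinal.nat_lt_aleph0 n))
    set m := Module.finrank K V with hm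
    refine ⟨m, Module.finrank_le_of_rank_le hrank, ?_⟩
    let b : Module.Basis (Fin m) K V := Module.finBasis K V
    let S : Sig → (V →ₗ[K] V) := fun a => (shiftT K Sig a).restrict (shift_mem s a)
    let M : Sig → Matrix (Fin m) (Fin m) K := fun a => (LinearMap.toMatrix b b (S a))ᵀ
    have hsV : s ∈ V := Submodule.subset_span ⟨[], rfl⟩
    let rε : V := ⟨s, hsV⟩
    let η : Fin m → K := fun i => (b i : List Sig → K) []
    refine ⟨M, b.repr rε, η, ?_⟩
    -- evaluation at [] as a linear map
    let ev : V →ₗ[K] K := (LinearMap.proj ([] : List Sig)).comp V.subtype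
    have heval : ∀ g : V, (⇑(b.repr g)) ⬝ᵥ η = (g : List Sig → K) [] := by
      intro g
      calc (⇑(b.repr g)) ⬝ᵥ η = ∑ i, b.repr g i * ev (b i) := rfl
        _ = ∑ i, ev (b.repr g i • b i) := by
            simp [_root_.map_smul, smul_eq_mul]
        _ = ev (∑ i, b.repr g i • b i) := (map_sum ev _ _).symm
        _ = ev g := by rw [b.sum_repr]
    have key : ∀ (w : List Sig) (f : V), ∃ g : V,
        (g : List Sig → K) = (fun y => (f : List Sig → K) (w ++ y)) ∧
          Matrix.vecMul (⇑(b.repr f)) ((w.map M).prod) = ⇑(b.repr g) := by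
      intro w
      induction w with
      | nil =>
          intro f
          exact ⟨f, rfl, by simp⟩
      | cons a t ih =>
          intro f
          obtain ⟨g, hg, hrepr⟩ := ih (S a f)
          refine ⟨g, ?_, ?_⟩
          · rw [hg]
            funext y
            have : ((S a f : V) : List Sig → K) = fun y => (f : List Sig → K) (a :: y) := rfl
            simp [this]
          · rw [List.map_cons, List.prod_cons, ← Matrix.vecMul_vecMul]
            have h1 : Matrix.vecMul (⇑(b.repr f)) (M a) = ⇑(b.repr (S a f)) := by
              show Matrix.vecMul (⇑(b.repr f)) (LinearMap.toMatrix b b (S a))ᵀ = _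
              rw [Matrix.vecMul_transpose, LinearMap.toMatrix_mulVec_repr]
            rw [h1, hrepr]
    intro w
    obtain ⟨g, hg, hrepr⟩ := key w rε
    rw [hrepr, heval, hg]
    simp [rε]
  · rintro ⟨m, hm, M, α, η, hsem⟩
    let g : Fin m → (List Sig → K) := fun i => fun y : List Sig => (((y.map M).prod) *ᵥ η) i
    have hsub : V ≤ Submodule.span K (Set.range g) := by
      rw [hV, Submodule.span_le]
      rintro _ ⟨x, rfl⟩
      have hx : (fun y => s (x ++ y)) =
          ∑ i, (Matrix.vecMul α ((x.map M).prod)) i • g i := by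
        funext y
        rw [← hsem (x ++ y)]
        rw [List.map_append, List.prod_append, ← Matrix.vecMul_vecMul,
          ← Matrix.dotProduct_mulVec]
        simp [dotProduct, g, Finset.sum_apply]
      show (fun y => s (x ++ y)) ∈ Submodule.span K (Set.range g)
      rw [hx]
      exact Submodule.sum_mem _ fun i _ =>
        Submodule.smul_mem _ _ (Submodule.subset_span ⟨i, rfl⟩)
    calc Module.rank K V ≤ Module.rank K (Submodule.span K (Set.range g)) :=
          Submodule.rank_mono hsub
      _ ≤ #(Set.range g) := rank_span_le _
      _ ≤ m := by
          have := Cardinal.mk_range_le_lift (f := g)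
          simpa using this
      _ ≤ n := Nat.cast_le.mpr hm
end
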